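/- arXiv:1410.1014 — 3 statements merged into one kernel-verified Lean document; each statement's English description precedes it below -/
import Mathlib

section
/- Let ε > 0, let u be an analytic nowhere-vanishing function on the polydisc D = Δ_ε × Δ_ε ⊆ ℂ² (with coordinates (v₁,v₂)), and suppose ∂u/∂v₂(v₁,v₂) = v₁^m·h(v₁,v₂) on D, where m is a natural number and h is analytic on D with h(0,·) not identically zero on Δ_ε. Then there exist b with |b| < ε, an open neighborhood U ⊆ D of (0,b), and analytic functions z₁, z₂ on U such that: (i) (z₁(0,b), z₂(0,b)) = (0,0); (ii) the Jacobian determinant (∂z₁/∂v₁)(∂z₂/∂v₂) − (∂z₁/∂v₂)(∂z₂/∂v₁) is nowhere zero on U; (iii) z₁ = v₁·e on U for some analytic nowhere-vanishing function e on U (so {v₁=0} ∩ U = {z₁=0} ∩ U); and (iv) v₁·u(v₁,v₂) = z₁·(1 + z₁^m·z₂) at every point of U. -/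
open Finset

namespace NFACL

noncomputable def ind {n : ℕ} (S : Finset (Fin n)) : Fin n → ℂ × ℂ :=
  fun i => if i ∈ S then ((1:ℂ), (0:ℂ)) else ((0:ℂ), (1:ℂ))

noncomputable def coefA (P : FormalMultilinearSeries ℂ (ℂ × ℂ) ℂ) (n j : ℕ) : ℂ :=
  ∑ S ∈ Finset.powersetCard j (Finset.univ : Finset (Fin n)), P n (ind S)

lemma norm_ind_le {n : ℕ} (S : Finset (Fin n)) (i : Fin n) : ‖ind S i‖ = 1 := by
  unfold ind
  split <;> simp [Prod.norm_def]

lemma coefA_norm_le (P : FormalMultilinearSeries ℂ (ℂ × ℂ) ℂ) (n j : ℕ) :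
    ‖coefA P n j‖ ≤ (n.choose j : ℝ) * ‖P n‖ := by
  unfold coefA
  calc ‖∑ S ∈ Finset.powersetCard j (Finset.univ : Finset (Fin n)), P n (ind S)‖
      ≤ ∑ S ∈ Finset.powersetCard j (Finset.univ : Finset (Fin n)), ‖P n (ind S)‖ :=
        norm_sum_le _ _
    _ ≤ ∑ _S ∈ Finset.powersetCard j (Finset.univ : Finset (Fin n)), ‖P n‖ := by
        refine Finset.sum_le_sum fun S _ => ?_
        calc ‖P n (ind S)‖ ≤ ‖P n‖ * ∏ i, ‖ind S i‖ := (P n).le_opNorm _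
          _ = ‖P n‖ := by simp [norm_ind_le]
    _ = (n.choose j : ℝ) * ‖P n‖ := by
        rw [Finset.sum_const, Finset.card_powersetCard, nsmul_eq_mul]
        simp

lemma keyA (P : FormalMultilinearSeries ℂ (ℂ × ℂ) ℂ) (n : ℕ) (x y : ℂ) :
    (P n fun _ => (x, y)) = ∑ j ∈ range (n + 1), coefA P n j * (x ^ j * y ^ (n - j)) := by
  classical
  have hsplit : (fun _ : Fin n => (x, y)) =
      ((fun _ : Fin n => ((x:ℂ), (0:ℂ))) + fun _ : Fin n => ((0:ℂ), y)) := by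
    funext i; simp [Prod.ext_iff]
  rw [hsplit]
  rw [show (P n) ((fun _ : Fin n => ((x:ℂ), (0:ℂ))) + fun _ : Fin n => ((0:ℂ), y))
        = (P n).toMultilinearMap ((fun _ : Fin n => ((x:ℂ), (0:ℂ))) + fun _ : Fin n => ((0:ℂ), y))
      from rfl, (P n).toMultilinearMap.map_add_univ]
  have hterm : ∀ S : Finset (Fin n),
      (P n).toMultilinearMap (S.piecewise (fun _ => ((x:ℂ), (0:ℂ))) fun _ => ((0:ℂ), y))
        = (x ^ S.card * y ^ (n - S.card)) • P n (ind S) := by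
    intro S
    have hpw : (S.piecewise (fun _ => ((x:ℂ), (0:ℂ))) fun _ => ((0:ℂ), y))
        = fun i => (if i ∈ S then x else y) • ind S i := by
      funext i
      by_cases hi : i ∈ S <;>
        simp [Finset.piecewise, hi, ind, Prod.smul_mk, smul_eq_mul]
    rw [hpw]
    have hms := (P n).map_smul_univ (fun i => if i ∈ S then x else y) (ind S)
    rw [show (P n).toMultilinearMap (fun i => (if i ∈ S then x else y) • ind S i)
          = P n (fun i => (if i ∈ S then x else y) • ind S i) from rfl, hms]
    congr 1
    rw [Finset.prod_ite (fun _ => x) (fun _ => y), Finset.prod_const, Finset.prod_const]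
    have h1 : (Finset.univ.filter (fun i : Fin n => i ∈ S)).card = S.card := by
      congr 1; ext i; simp
    have h2 : (Finset.univ.filter (fun i : Fin n => ¬ i ∈ S)).card = n - S.card := by
      have he : Finset.univ.filter (fun i : Fin n => ¬ i ∈ S) = Sᶜ := by ext i; simp
      rw [he, Finset.card_compl]; simp
    rw [h1, h2]
  calc (∑ S : Finset (Fin n),
        (P n).toMultilinearMap (S.piecewise (fun _ => ((x:ℂ), (0:ℂ))) fun _ => ((0:ℂ), y)))
      = ∑ S : Finset (Fin n), (x ^ S.card * y ^ (n - S.card)) • P n (ind S) := by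
        exact Finset.sum_congr rfl fun S _ => hterm S
    _ = ∑ S ∈ (Finset.univ : Finset (Fin n)).powerset,
          (x ^ S.card * y ^ (n - S.card)) • P n (ind S) := by
        rw [Finset.powerset_univ]
    _ = ∑ j ∈ range ((Finset.univ : Finset (Fin n)).card + 1),
          ∑ S ∈ Finset.powersetCard j (Finset.univ : Finset (Fin n)),
            (x ^ S.card * y ^ (n - S.card)) • P n (ind S) := Finset.sum_powerset _ _
    _ = ∑ j ∈ range (n + 1), coefA P n j * (x ^ j * y ^ (n - j)) := by
        rw [show (Finset.univ : Finset (Fin n)).card = n by simp]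
        refine Finset.sum_congr rfl fun j _ => ?_
        rw [show (∑ S ∈ Finset.powersetCard j (Finset.univ : Finset (Fin n)),
              (x ^ S.card * y ^ (n - S.card)) • P n (ind S))
            = ∑ S ∈ Finset.powersetCard j (Finset.univ : Finset (Fin n)),
              (x ^ j * y ^ (n - j)) • P n (ind S) from
          Finset.sum_congr rfl fun S hS => by
            rw [(Finset.mem_powersetCard.1 hS).2]]
        rw [← Finset.smul_sum, coefA, smul_eq_mul, mul_comm]


noncomputable def Mmap (n j : ℕ) : ContinuousMultilinearMap ℂ (fun _ : Fin n => ℂ × ℂ) ℂ :=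
  (ContinuousMultilinearMap.mkPiAlgebraFin ℂ n ℂ).compContinuousLinearMap
    (fun i => if (i : ℕ) < j then ContinuousLinearMap.fst ℂ ℂ ℂ else ContinuousLinearMap.snd ℂ ℂ ℂ)

lemma Mmap_norm_le (n j : ℕ) : ‖Mmap n j‖ ≤ 1 := by
  refine (ContinuousMultilinearMap.norm_compContinuousLinearMap_le _ _).trans ?_
  have h1 : ‖ContinuousMultilinearMap.mkPiAlgebraFin ℂ n ℂ‖ = 1 :=
    ContinuousMultilinearMap.norm_mkPiAlgebraFin
  rw [h1, one_mul]
  refine Finset.prod_le_one (fun i _ => norm_nonneg _) (fun i _ => ?_)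
  split
  · exact ContinuousLinearMap.norm_fst_le ℂ ℂ ℂ
  · exact ContinuousLinearMap.norm_snd_le ℂ ℂ ℂ

lemma Mmap_apply (n j : ℕ) (hj : j ≤ n) (x y : ℂ) :
    (Mmap n j fun _ => (x, y)) = x ^ j * y ^ (n - j) := by
  classical
  rw [Mmap, ContinuousMultilinearMap.compContinuousLinearMap_apply,
    ContinuousMultilinearMap.mkPiAlgebraFin_apply, List.prod_ofFn]
  have : ∀ i : Fin n,
      ((if (i : ℕ) < j then ContinuousLinearMap.fst ℂ ℂ ℂ else ContinuousLinearMap.snd ℂ ℂ ℂ)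
        ((x, y) : ℂ × ℂ)) = if (i : ℕ) < j then x else y := by
    intro i; split <;> rfl
  rw [Finset.prod_congr rfl fun i _ => this i]
  rw [Fin.prod_univ_eq_prod_range (fun i => if i < j then x else y) n]
  rw [Finset.prod_ite (fun _ => x) (fun _ => y), Finset.prod_const, Finset.prod_const]
  have h1 : ((Finset.range n).filter (fun i => i < j)).card = j := by
    have : (Finset.range n).filter (fun i => i < j) = Finset.range j := by
      ext i; simp only [Finset.mem_filter, Finset.mem_range]; omega
    rw [this, Finset.card_range]
  have h2 : ((Finset.range n).filter (fun i => ¬ i < j)).card = n - j := by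
    have : (Finset.range n).filter (fun i => ¬ i < j) = Finset.Ico j n := by
      ext i; simp only [Finset.mem_filter, Finset.mem_range, Finset.mem_Ico]; omega
    rw [this, Nat.card_Ico]
  rw [h1, h2]

noncomputable def Qser (P : FormalMultilinearSeries ℂ (ℂ × ℂ) ℂ) :
    FormalMultilinearSeries ℂ (ℂ × ℂ) ℂ :=
  fun n => ∑ j ∈ range (n + 1), coefA P (n + 1) (j + 1) • Mmap n j

lemma Qser_apply (P : FormalMultilinearSeries ℂ (ℂ × ℂ) ℂ) (n : ℕ) (x y : ℂ) :
    (Qser P n fun _ => (x, y))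
      = ∑ j ∈ range (n + 1), coefA P (n + 1) (j + 1) * (x ^ j * y ^ (n - j)) := by
  rw [Qser, ContinuousMultilinearMap.sum_apply]
  refine Finset.sum_congr rfl fun j hj => ?_
  rw [ContinuousMultilinearMap.smul_apply, Mmap_apply n j (by
    simpa using Nat.lt_succ_iff.1 (Finset.mem_range.1 hj)), smul_eq_mul]

lemma Qser_norm_le (P : FormalMultilinearSeries ℂ (ℂ × ℂ) ℂ) (n : ℕ) :
    ‖Qser P n‖ ≤ 2 ^ (n + 1) * ‖P (n + 1)‖ := by
  refine (norm_sum_le _ _).trans ?_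
  have hb : ∀ j ∈ range (n + 1),
      ‖coefA P (n + 1) (j + 1) • Mmap n j‖ ≤ ((n + 1).choose (j + 1) : ℝ) * ‖P (n + 1)‖ := by
    intro j _
    refine le_trans ((Mmap n j).opNorm_smul_le (coefA P (n + 1) (j + 1))) ?_
    calc ‖coefA P (n + 1) (j + 1)‖ * ‖Mmap n j‖ ≤ ‖coefA P (n + 1) (j + 1)‖ * 1 := by
          have := Mmap_norm_le n j
          exact mul_le_mul_of_nonneg_left this (norm_nonneg _)
      _ = ‖coefA P (n + 1) (j + 1)‖ := mul_one _
      _ ≤ ((n + 1).choose (j + 1) : ℝ) * ‖P (n + 1)‖ := coefA_norm_le _ _ _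
  refine (Finset.sum_le_sum hb).trans ?_
  rw [← Finset.sum_mul]
  refine mul_le_mul_of_nonneg_right ?_ (norm_nonneg _)
  have : (∑ j ∈ range (n + 1), ((n + 1).choose (j + 1) : ℝ))
      = ((∑ j ∈ range (n + 1), (n + 1).choose (j + 1) : ℕ) : ℝ) := by push_cast; rfl
  rw [this]
  have hn : (∑ j ∈ range (n + 1), (n + 1).choose (j + 1)) ≤ 2 ^ (n + 1) := by
    have h1 := Finset.sum_range_succ' (fun i => (n + 1).choose i) (n + 1)
    have h2 := Nat.sum_range_choose (n + 1)
    omega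
  calc ((∑ j ∈ range (n + 1), (n + 1).choose (j + 1) : ℕ) : ℝ)
      ≤ ((2 ^ (n + 1) : ℕ) : ℝ) := by exact_mod_cast hn
    _ = 2 ^ (n + 1) := by push_cast; ring

end NFACL

namespace NFACL

open Metric
open scoped NNReal ENNReal

lemma divL {f : ℂ × ℂ → ℂ} {b : ℂ} {ρ : ℝ} (hρ : 0 < ρ)
    (hf : AnalyticOnNhd ℂ f (ball ((0:ℂ), b) ρ))
    (hax : ∀ y : ℂ, ((0:ℂ), y) ∈ ball ((0:ℂ), b) ρ → f (0, y) = 0) :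
    ∃ ρ' : ℝ, 0 < ρ' ∧ ρ' ≤ ρ ∧ ∃ g : ℂ × ℂ → ℂ,
      AnalyticOnNhd ℂ g (ball ((0:ℂ), b) ρ') ∧
      ∀ p ∈ ball ((0:ℂ), b) ρ', f p = p.1 * g p := by
  obtain ⟨P, r, hP⟩ := hf ((0:ℂ), b) (mem_ball_self hρ)
  obtain ⟨r₀, hr₀pos, hr₀lt⟩ := ENNReal.lt_iff_exists_nnreal_btwn.1 hP.r_pos
  have hr₀pos' : (0:ℝ) < r₀ := by exact_mod_cast hr₀pos
  obtain ⟨C, hCpos, hC⟩ := P.norm_mul_pow_le_of_lt_radius (hr₀lt.trans_le hP.r_le)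
  -- radius bound for Qser P
  have hQrad : ((r₀ / 2 : ℝ≥0) : ℝ≥0∞) ≤ (Qser P).radius := by
    refine (Qser P).le_radius_of_bound (2 * C / r₀) fun n => ?_
    have h1 : ‖Qser P n‖ * ((r₀ / 2 : ℝ≥0) : ℝ) ^ n
        ≤ (2 ^ (n + 1) * ‖P (n + 1)‖) * ((r₀ : ℝ) / 2) ^ n := by
      have : ((r₀ / 2 : ℝ≥0) : ℝ) = (r₀ : ℝ) / 2 := by push_cast; ring
      rw [this]
      exact mul_le_mul_of_nonneg_right (Qser_norm_le P n)
        (pow_nonneg (by positivity) n)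
    refine h1.trans ?_
    have h2 : (2:ℝ) ^ (n + 1) * ‖P (n + 1)‖ * ((r₀ : ℝ) / 2) ^ n
        = (2 / (r₀ : ℝ)) * (‖P (n + 1)‖ * (r₀ : ℝ) ^ (n + 1)) := by
      rw [div_pow]
      field_simp
      ring
    rw [h2]
    have h3 := hC (n + 1)
    calc (2 / (r₀ : ℝ)) * (‖P (n + 1)‖ * (r₀ : ℝ) ^ (n + 1))
        ≤ (2 / (r₀ : ℝ)) * C := by
          exact mul_le_mul_of_nonneg_left h3 (by positivity)
      _ = 2 * C / r₀ := by ring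
  have hQpos : 0 < (Qser P).radius := lt_of_lt_of_le (by exact_mod_cast half_pos hr₀pos') hQrad
  have hQ : HasFPowerSeriesOnBall (Qser P).sum (Qser P) 0 (Qser P).radius :=
    (Qser P).hasFPowerSeriesOnBall hQpos
  set ρ' := min ((r₀ : ℝ) / 2) ρ with hρ'def
  refine ⟨ρ', lt_min (half_pos hr₀pos') hρ, min_le_right _ _,
    fun p => (Qser P).sum (p - ((0:ℂ), b)), ?_, ?_⟩
  · intro p hp
    have hv : (p - ((0:ℂ), b)) ∈ Metric.eball (0 : ℂ × ℂ) (Qser P).radius := by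
      rw [EMetric.mem_ball, edist_zero_right]
      refine lt_of_lt_of_le ?_ hQrad
      have h1 : ‖p - ((0:ℂ), b)‖ < (r₀ : ℝ) / 2 :=
        lt_of_lt_of_le (by rw [← dist_eq_norm]; exact hp) (min_le_left _ _)
      have : ‖p - ((0:ℂ), b)‖₊ < (r₀ / 2 : ℝ≥0) := by
        rw [← NNReal.coe_lt_coe]
        push_cast
        simpa using h1
      exact_mod_cast this
    have hinner : AnalyticAt ℂ (fun q : ℂ × ℂ => q - ((0:ℂ), b)) p :=
      analyticAt_id.sub analyticAt_const
    have hcomp : AnalyticAt ℂ ((Qser P).sum ∘ fun q : ℂ × ℂ => q - ((0:ℂ), b)) p :=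
      AnalyticAt.comp (by exact hQ.analyticAt_of_mem hv) hinner
    exact hcomp
  · intro p hp
    set v := p - ((0:ℂ), b) with hvdef
    have hvn : ‖v‖ < ρ' := by rw [hvdef, ← dist_eq_norm]; exact hp
    have hvr : (v : ℂ × ℂ) ∈ Metric.eball (0 : ℂ × ℂ) r := by
      rw [EMetric.mem_ball, edist_zero_right]
      refine lt_trans ?_ hr₀lt
      have h1 : ‖v‖ < (r₀ : ℝ) := lt_of_lt_of_le hvn ((min_le_left _ _).trans (by linarith))
      have : ‖v‖₊ < r₀ := by rw [← NNReal.coe_lt_coe]; simpa using h1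
      exact_mod_cast this
    have hs1 : HasSum (fun n => P n fun _ => v) (f p) := by
      have := hP.hasSum hvr
      simpa [hvdef] using this
    have hvr2 : ((0:ℂ), v.2) ∈ Metric.eball (0 : ℂ × ℂ) r := by
      rw [EMetric.mem_ball, edist_zero_right]
      refine lt_trans ?_ hr₀lt
      have h0 : ‖((0:ℂ), v.2)‖ = ‖v.2‖ := by
        rw [Prod.norm_def]; simp [norm_nonneg]
      have h1 : ‖((0:ℂ), v.2)‖ < (r₀ : ℝ) := by
        rw [h0]
        exact lt_of_le_of_lt (norm_snd_le v) (lt_of_lt_of_le hvn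
          ((min_le_left _ _).trans (by linarith)))
      have : ‖((0:ℂ), v.2)‖₊ < r₀ := by rw [← NNReal.coe_lt_coe]; simpa using h1
      exact_mod_cast this
    have hs3 : HasSum (fun n => P n fun _ => ((0:ℂ), v.2)) 0 := by
      have h := hP.hasSum hvr2
      have hmem : ((0:ℂ), b + v.2) ∈ ball ((0:ℂ), b) ρ := by
        rw [mem_ball]
        have : dist ((0:ℂ), b + v.2) ((0:ℂ), b) = ‖v.2‖ := by
          rw [Prod.dist_eq]
          simp [dist_eq_norm]
        rw [this]
        exact lt_of_le_of_lt (norm_snd_le v) (lt_of_lt_of_le hvn (min_le_right _ _))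
      have hz : f (((0:ℂ), b) + ((0:ℂ), v.2)) = 0 := by
        have : (((0:ℂ), b) + ((0:ℂ), v.2)) = ((0:ℂ), b + v.2) := by simp [Prod.ext_iff]
        rw [this]
        exact hax _ hmem
      rwa [hz] at h
    have hvQ : (v : ℂ × ℂ) ∈ Metric.eball (0 : ℂ × ℂ) (Qser P).radius := by
      rw [EMetric.mem_ball, edist_zero_right]
      refine lt_of_lt_of_le ?_ hQrad
      have h1 : ‖v‖ < (r₀ : ℝ) / 2 := lt_of_lt_of_le hvn (min_le_left _ _)
      have : ‖v‖₊ < (r₀ / 2 : ℝ≥0) := by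
        rw [← NNReal.coe_lt_coe]; push_cast; simpa using h1
      exact_mod_cast this
    have hs2 : HasSum (fun n => Qser P n fun _ => v) ((Qser P).sum v) := by
      have := hQ.hasSum hvQ
      simpa using this
    -- the per-term relation
    have hkey : ∀ n : ℕ, (P (n+1) fun _ => v)
        = (P (n+1) fun _ => ((0:ℂ), v.2)) + v.1 * (Qser P n fun _ => v) := by
      intro n
      have hv2 : v = (v.1, v.2) := rfl
      have hC1 : (P (n+1) fun _ => ((0:ℂ), v.2)) = v.2 ^ (n+1) * coefA P (n+1) 0 := by
        have hsm : (fun _ : Fin (n+1) => ((0:ℂ), v.2))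
            = fun i => v.2 • ind (∅ : Finset (Fin (n+1))) i := by
          funext i; simp [ind, Prod.smul_mk, smul_eq_mul, Prod.ext_iff]
        rw [hsm]
        have := (P (n+1)).map_smul_univ (fun _ : Fin (n+1) => v.2)
          (ind (∅ : Finset (Fin (n+1))))
        rw [this, coefA]
        rw [Finset.powersetCard_zero, Finset.sum_singleton]
        simp [smul_eq_mul]
      rw [hv2, keyA, Qser_apply, hC1]
      rw [Finset.sum_range_succ' _ (n+1)]
      simp only [pow_zero, Nat.sub_zero, one_mul]
      rw [Finset.mul_sum]
      have hterm : ∀ j, coefA P (n+1) (j+1) * ((v.1) ^ (j+1) * (v.2) ^ (n + 1 - (j+1)))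
          = v.1 * (coefA P (n+1) (j+1) * ((v.1) ^ j * (v.2) ^ (n - j))) := by
        intro j
        have : n + 1 - (j + 1) = n - j := by omega
        rw [this]; ring
      rw [Finset.sum_congr rfl fun j _ => hterm j]
      ring
    -- now sum up
    have hA0 : (P 0 fun _ : Fin 0 => v) = (P 0 fun _ : Fin 0 => ((0:ℂ), v.2)) := by
      congr 1; funext i; exact i.elim0
    have hsum2 : Summable fun n => P (n+1) fun _ => ((0:ℂ), v.2) :=
      (summable_nat_add_iff 1).2 hs3.summable
    have hsum3 : Summable fun n => v.1 * (Qser P n fun _ => v) :=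
      hs2.summable.mul_left _
    calc f p = ∑' n, (P n fun _ => v) := hs1.tsum_eq.symm
      _ = (P 0 fun _ : Fin 0 => v) + ∑' n, (P (n+1) fun _ => v) := by
          rw [hs1.summable.tsum_eq_zero_add]
      _ = (P 0 fun _ : Fin 0 => ((0:ℂ), v.2))
            + ∑' n, ((P (n+1) fun _ => ((0:ℂ), v.2)) + v.1 * (Qser P n fun _ => v)) := by
          rw [hA0]
          congr 1
          exact tsum_congr hkey
      _ = ((P 0 fun _ : Fin 0 => ((0:ℂ), v.2))
            + ∑' n, (P (n+1) fun _ => ((0:ℂ), v.2)))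
            + ∑' n, v.1 * (Qser P n fun _ => v) := by
          rw [hsum2.tsum_add hsum3]; ring
      _ = (∑' n, (P n fun _ => ((0:ℂ), v.2))) + v.1 * ((Qser P).sum v) := by
          rw [hs3.summable.tsum_eq_zero_add, tsum_mul_left, hs2.tsum_eq]
      _ = v.1 * ((Qser P).sum v) := by rw [hs3.tsum_eq]; ring
      _ = p.1 * (Qser P).sum (p - ((0:ℂ), b)) := by
          rw [hvdef]; simp

end NFACL

namespace NFACL

open Metric Filter
open scoped Topology

lemma one_dim_zero {φ : ℂ → ℂ} (hφ : ContinuousAt φ 0)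
    (h : ∀ᶠ t in 𝓝[≠] (0:ℂ), φ t = 0) : φ 0 = 0 := by
  have h1 : Tendsto φ (𝓝[≠] (0:ℂ)) (𝓝 (φ 0)) :=
    hφ.continuousWithinAt.tendsto
  have h2 : Tendsto φ (𝓝[≠] (0:ℂ)) (𝓝 (0:ℂ)) :=
    Tendsto.congr' (h.mono fun t ht => ht.symm) tendsto_const_nhds
  exact tendsto_nhds_unique h1 h2

lemma two_cont_ext {F K : ℂ × ℂ → ℂ} {y : ℂ}
    (hF : ContinuousAt F ((0:ℂ), y)) (hK : ContinuousAt K ((0:ℂ), y))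
    {S : Set (ℂ × ℂ)} (hS : S ∈ 𝓝 (((0:ℂ), y) : ℂ × ℂ))
    (heq : ∀ p ∈ S, p.1 ≠ 0 → F p = K p) : F ((0:ℂ), y) = K ((0:ℂ), y) := by
  have hγc : ContinuousAt (fun t : ℂ => ((t, y) : ℂ × ℂ)) 0 :=
    (continuous_id.prodMk continuous_const).continuousAt
  have hγ : Tendsto (fun t : ℂ => ((t, y) : ℂ × ℂ)) (𝓝[≠] (0:ℂ)) (𝓝 (((0:ℂ), y) : ℂ × ℂ)) :=
    (hγc.tendsto).mono_left nhdsWithin_le_nhds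
  have h1 : Tendsto (fun t : ℂ => F (t, y)) (𝓝[≠] (0:ℂ)) (𝓝 (F ((0:ℂ), y))) :=
    (hF.tendsto).comp hγ
  have h2 : Tendsto (fun t : ℂ => K (t, y)) (𝓝[≠] (0:ℂ)) (𝓝 (K ((0:ℂ), y))) :=
    (hK.tendsto).comp hγ
  have hev : ∀ᶠ t in 𝓝[≠] (0:ℂ), F (t, y) = K (t, y) := by
    have hpre : (fun t : ℂ => ((t, y) : ℂ × ℂ)) ⁻¹' S ∈ 𝓝 (0:ℂ) := hγc hS
    have hne : ∀ᶠ t in 𝓝[≠] (0:ℂ), t ≠ 0 :=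
      eventually_mem_nhdsWithin
    filter_upwards [nhdsWithin_le_nhds hpre, hne] with t ht hne'
    exact heq _ ht hne'
  exact tendsto_nhds_unique (h1.congr' (hev.mono fun t ht => ht)) h2

lemma vert_const {f : ℂ × ℂ → ℂ} {b : ℂ} {ρ : ℝ} {y : ℂ}
    (hf : AnalyticOnNhd ℂ f (ball ((0:ℂ), b) ρ))
    (hd : ∀ p ∈ ball ((0:ℂ), b) ρ, p.1 = 0 → fderiv ℂ f p ((0:ℂ), (1:ℂ)) = 0)
    (hy : ((0:ℂ), y) ∈ ball ((0:ℂ), b) ρ) : f (0, y) = f (0, b) := by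
  have hmem : ∀ t : ℂ, t ∈ ball b ρ → ((0:ℂ), t) ∈ ball ((0:ℂ), b) ρ := by
    intro t ht
    rw [mem_ball] at ht ⊢
    rw [Prod.dist_eq, dist_self, max_eq_right dist_nonneg]
    exact ht
  have hyb : y ∈ ball b ρ := by
    rw [mem_ball]
    have := mem_ball.1 hy
    rw [Prod.dist_eq] at this
    simpa using lt_of_le_of_lt (le_max_right _ _) this
  have hbb : b ∈ ball b ρ := by
    rcases Metric.nonempty_ball.1 ⟨y, hyb⟩ with hρpos
    exact mem_ball_self hρpos
  -- derivative of t ↦ f (0, t) is zero on ball b ρ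
  have hder : ∀ t ∈ ball b ρ,
      HasFDerivWithinAt (fun t : ℂ => f (0, t)) (0 : ℂ →L[ℂ] ℂ) (ball b ρ) t := by
    intro t ht
    have hγ : HasFDerivAt (fun t : ℂ => (((0:ℂ), t) : ℂ × ℂ))
        ((0 : ℂ →L[ℂ] ℂ).prod (ContinuousLinearMap.id ℂ ℂ)) t :=
      (hasFDerivAt_const (0:ℂ) t).prodMk (hasFDerivAt_id t)
    have hfd : HasFDerivAt f (fderiv ℂ f ((0:ℂ), t)) ((0:ℂ), t) :=
      (hf _ (hmem t ht)).differentiableAt.hasFDerivAt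
    have hcomp := hfd.comp t hγ
    have hzero : (fderiv ℂ f ((0:ℂ), t)).comp
        ((0 : ℂ →L[ℂ] ℂ).prod (ContinuousLinearMap.id ℂ ℂ)) = 0 := by
      refine ContinuousLinearMap.ext fun w => ?_
      have h1 : ((0 : ℂ →L[ℂ] ℂ).prod (ContinuousLinearMap.id ℂ ℂ)) w = ((0:ℂ), w) := by
        simp
      rw [ContinuousLinearMap.comp_apply, h1]
      have h2 : ((0:ℂ), w) = w • (((0:ℂ), (1:ℂ)) : ℂ × ℂ) := by
        simp [Prod.smul_mk, Prod.ext_iff]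
      rw [h2, (fderiv ℂ f ((0:ℂ), t)).map_smul, hd _ (hmem t ht) rfl]
      simp
    rw [hzero] at hcomp
    exact hcomp.hasFDerivWithinAt
  have := (convex_ball b ρ).norm_image_sub_le_of_norm_hasFDerivWithin_le
    (C := 0) hder (fun t _ => by simp) hbb hyb
  have hle : ‖f (0, y) - f (0, b)‖ ≤ 0 := by simpa using this
  have hz : (fun t : ℂ => f (0, t)) y - (fun t : ℂ => f (0, t)) b = 0 :=
    norm_le_zero_iff.1 hle
  simpa using sub_eq_zero.1 hz

lemma divPow {b : ℂ} {h : ℂ × ℂ → ℂ} :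
    ∀ (k : ℕ) (f : ℂ × ℂ → ℂ) (ρ : ℝ), 0 < ρ →
    AnalyticOnNhd ℂ f (ball ((0:ℂ), b) ρ) →
    AnalyticOnNhd ℂ h (ball ((0:ℂ), b) ρ) →
    (∀ p ∈ ball ((0:ℂ), b) ρ, fderiv ℂ f p ((0:ℂ), (1:ℂ)) = p.1 ^ k * h p) →
    (∀ x : ℂ, ((x:ℂ), b) ∈ ball ((0:ℂ), b) ρ → f (x, b) = 0) →
    ∃ ρ' : ℝ, 0 < ρ' ∧ ρ' ≤ ρ ∧ ∃ g : ℂ × ℂ → ℂ,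
      AnalyticOnNhd ℂ g (ball ((0:ℂ), b) ρ') ∧
      (∀ p ∈ ball ((0:ℂ), b) ρ', f p = p.1 ^ k * g p) ∧
      (∀ p ∈ ball ((0:ℂ), b) ρ', fderiv ℂ g p ((0:ℂ), (1:ℂ)) = h p) ∧
      (∀ x : ℂ, ((x:ℂ), b) ∈ ball ((0:ℂ), b) ρ' → g (x, b) = 0) := by
  intro k
  induction k with
  | zero =>
    intro f ρ hρ hf hh hd hψ
    exact ⟨ρ, hρ, le_refl _, f, hf, fun p _ => by simp,
      fun p hp => by simpa using hd p hp, hψ⟩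
  | succ k IH =>
    intro f ρ hρ hf hh hd hψ
    -- f vanishes on the axis
    have hax : ∀ y : ℂ, ((0:ℂ), y) ∈ ball ((0:ℂ), b) ρ → f (0, y) = 0 := by
      intro y hy
      have hvc := vert_const hf (fun p hp hp0 => by
        rw [hd p hp, hp0, zero_pow (Nat.succ_ne_zero k), zero_mul]) hy
      rw [hvc]
      exact hψ 0 (mem_ball_self hρ)
    obtain ⟨ρ₁, hρ₁pos, hρ₁le, g₁, hg₁an, hfe⟩ := divL hρ hf hax
    have hsub : ball ((0:ℂ), b) ρ₁ ⊆ ball ((0:ℂ), b) ρ := ball_subset_ball hρ₁le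
    have hcenter : ((0:ℂ), b) ∈ ball ((0:ℂ), b) ρ₁ := mem_ball_self hρ₁pos
    -- g₁ vanishes on the horizontal line
    have hψ₁ : ∀ x : ℂ, ((x:ℂ), b) ∈ ball ((0:ℂ), b) ρ₁ → g₁ (x, b) = 0 := by
      intro x hx
      by_cases hx0 : x = 0
      · subst hx0
        have hι : ContinuousAt (fun t : ℂ => ((t, b) : ℂ × ℂ)) 0 :=
          (continuous_id.prodMk continuous_const).continuousAt
        have hφc : ContinuousAt (fun t : ℂ => g₁ (t, b)) 0 :=
          ContinuousAt.comp (hg₁an _ hcenter).continuousAt hι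
        refine one_dim_zero hφc ?_
        have hballnhds : (fun t : ℂ => ((t, b) : ℂ × ℂ)) ⁻¹' (ball ((0:ℂ), b) ρ₁) ∈ 𝓝 (0:ℂ) :=
          ((continuous_id.prodMk continuous_const).continuousAt)
            (isOpen_ball.mem_nhds hcenter)
        filter_upwards [nhdsWithin_le_nhds hballnhds, eventually_mem_nhdsWithin] with t ht htne
        have hfeq := hfe (t, b) ht
        rw [hψ t (hsub ht)] at hfeq
        exact ((mul_eq_zero.1 hfeq.symm).resolve_left htne)
      · have hfeq := hfe (x, b) hx
        rw [hψ x (hsub hx)] at hfeq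
        exact ((mul_eq_zero.1 hfeq.symm).resolve_left hx0)
    -- derivative property for g₁
    have hd₁ : ∀ p ∈ ball ((0:ℂ), b) ρ₁,
        fderiv ℂ g₁ p ((0:ℂ), (1:ℂ)) = p.1 ^ k * h p := by
      have hne : ∀ p ∈ ball ((0:ℂ), b) ρ₁, p.1 ≠ 0 →
          fderiv ℂ g₁ p ((0:ℂ), (1:ℂ)) = p.1 ^ k * h p := by
        intro p hp hp0
        have heq : f =ᶠ[𝓝 p] fun q : ℂ × ℂ => q.1 * g₁ q := by
          filter_upwards [isOpen_ball.mem_nhds hp] with q hq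
          exact hfe q hq
        have hdm := fderiv_fun_mul (𝕜 := ℂ) (differentiableAt_fst (p := p))
          (hg₁an p hp).differentiableAt
        have h2 : fderiv ℂ f p = fderiv ℂ (fun q : ℂ × ℂ => q.1 * g₁ q) p :=
          heq.fderiv_eq
        have h3 : fderiv ℂ f p ((0:ℂ), (1:ℂ))
            = p.1 * fderiv ℂ g₁ p ((0:ℂ), (1:ℂ)) := by
          rw [h2, hdm]
          simp only [ContinuousLinearMap.add_apply, ContinuousLinearMap.smul_apply,
            smul_eq_mul]
          rw [fderiv_fst]
          simp
        have h4 := hd p (hsub hp)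
        rw [h3] at h4
        have h5 : p.1 * fderiv ℂ g₁ p ((0:ℂ), (1:ℂ)) = p.1 * (p.1 ^ k * h p) := by
          rw [h4]; ring
        exact mul_left_cancel₀ hp0 h5
      intro p hp
      by_cases hp0 : p.1 = 0
      · have hpeq : p = ((0:ℂ), p.2) := by
          rw [← hp0]
        have hF : ContinuousAt (fun q : ℂ × ℂ => fderiv ℂ g₁ q ((0:ℂ), (1:ℂ))) p := by
          have hfd := hg₁an.fderiv
          exact ((ContinuousLinearMap.apply ℂ ℂ (((0:ℂ), (1:ℂ)) : ℂ × ℂ)).continuous.continuousAt).comp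
            ((hfd p hp).continuousAt)
        have hK : ContinuousAt (fun q : ℂ × ℂ => q.1 ^ k * h q) p :=
          ((continuousAt_fst.pow k).mul (hh p (hsub hp)).continuousAt)
        rw [hpeq] at hF hK hp ⊢
        exact two_cont_ext hF hK (isOpen_ball.mem_nhds hp)
          (fun q hq hq0 => hne q hq hq0)
      · exact hne p hp hp0
    obtain ⟨ρ', hρ'pos, hρ'le, g, hgan, hge, hgd, hgψ⟩ :=
      IH g₁ ρ₁ hρ₁pos hg₁an (fun p hp => hh p (hsub hp)) hd₁ hψ₁
    refine ⟨ρ', hρ'pos, hρ'le.trans hρ₁le, g, hgan, ?_, hgd, hgψ⟩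
    intro p hp
    have h1 := hfe p (ball_subset_ball hρ'le hp)
    have h2 := hge p hp
    rw [h1, h2]
    ring

end NFACL


open Complex Metric NFACL Topology

/-- **Normal form along a common leaf.**
Let `u` be analytic and nowhere vanishing on the bidisc `D = Δ_ε × Δ_ε` with
`∂u/∂v₂ = v₁^m·h` where `h` is analytic on `D` and `h(0,·)` is not identically zero.
Then near some point `(0,b)` of the leaf `{v₁ = 0}` there is a holomorphic coordinate
chart `(z₁,z₂)` centered at `(0,b)` with `{v₁ = 0} = {z₁ = 0}` and
`v₁·u(v₁,v₂) = z₁·(1 + z₁^m·z₂)`. -/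
theorem normal_form_along_common_leaf
    (ε : ℝ) (hε : 0 < ε) (m : ℕ)
    (u h : ℂ × ℂ → ℂ)
    (hu : AnalyticOnNhd ℂ u {p : ℂ × ℂ | ‖p.1‖ < ε ∧ ‖p.2‖ < ε})
    (hu0 : ∀ p : ℂ × ℂ, ‖p.1‖ < ε → ‖p.2‖ < ε → u p ≠ 0)
    (hh : AnalyticOnNhd ℂ h {p : ℂ × ℂ | ‖p.1‖ < ε ∧ ‖p.2‖ < ε})
    (hder : ∀ p : ℂ × ℂ, ‖p.1‖ < ε → ‖p.2‖ < ε →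
      fderiv ℂ u p (0, 1) = p.1 ^ m * h p)
    (hh0 : ∃ y : ℂ, ‖y‖ < ε ∧ h (0, y) ≠ 0) :
    ∃ b : ℂ, ‖b‖ < ε ∧
    ∃ U : Set (ℂ × ℂ), IsOpen U ∧ ((0 : ℂ), b) ∈ U ∧
      U ⊆ {p : ℂ × ℂ | ‖p.1‖ < ε ∧ ‖p.2‖ < ε} ∧
    ∃ z₁ z₂ : ℂ × ℂ → ℂ,
      AnalyticOnNhd ℂ z₁ U ∧ AnalyticOnNhd ℂ z₂ U ∧
      (z₁ (0, b) = 0 ∧ z₂ (0, b) = 0) ∧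
      (∀ q ∈ U, fderiv ℂ z₁ q (1, 0) * fderiv ℂ z₂ q (0, 1) -
        fderiv ℂ z₁ q (0, 1) * fderiv ℂ z₂ q (1, 0) ≠ 0) ∧
      (∃ e : ℂ × ℂ → ℂ, AnalyticOnNhd ℂ e U ∧ (∀ q ∈ U, e q ≠ 0) ∧
        ∀ q ∈ U, z₁ q = q.1 * e q) ∧
      (∀ q ∈ U, q.1 * u q = z₁ q * (1 + (z₁ q) ^ m * z₂ q)) := by
  classical
  obtain ⟨b, hb, hhb⟩ := hh0
  set D : Set (ℂ × ℂ) := {p : ℂ × ℂ | ‖p.1‖ < ε ∧ ‖p.2‖ < ε} with hD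
  set ρ₀ : ℝ := min ε (ε - ‖b‖) with hρ₀
  have hρ₀pos : 0 < ρ₀ := lt_min hε (by linarith)
  have hballD : ball ((0:ℂ), b) ρ₀ ⊆ D := by
    intro p hp
    rw [mem_ball, Prod.dist_eq] at hp
    have h1 : dist p.1 0 < ρ₀ := lt_of_le_of_lt (le_max_left _ _) hp
    have h2 : dist p.2 b < ρ₀ := lt_of_le_of_lt (le_max_right _ _) hp
    rw [Complex.dist_eq, sub_zero] at h1
    rw [Complex.dist_eq] at h2
    constructor
    · exact lt_of_lt_of_le h1 (min_le_left _ _)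
    · have h3 : ‖p.2‖ ≤ ‖p.2 - b‖ + ‖b‖ := by
        simpa using norm_add_le (p.2 - b) b
      have h4 : ‖p.2 - b‖ < ε - ‖b‖ :=
        lt_of_lt_of_le h2 (min_le_right _ _)
      linarith
  have hbD : ∀ q : ℂ × ℂ, ‖q.1‖ < ε → ((q.1, b) : ℂ × ℂ) ∈ D := by
    intro q hq; exact ⟨hq, hb⟩
  -- the unit e
  set e : ℂ × ℂ → ℂ := fun q => u (q.1, b) with he
  have ha_e : ∀ q : ℂ × ℂ, ‖q.1‖ < ε → AnalyticAt ℂ e q := by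
    intro q hq
    have hinner : AnalyticAt ℂ (fun p : ℂ × ℂ => ((p.1, b) : ℂ × ℂ)) q :=
      analyticAt_fst.prod analyticAt_const
    have : AnalyticAt ℂ (u ∘ fun p : ℂ × ℂ => ((p.1, b) : ℂ × ℂ)) q :=
      AnalyticAt.comp (g := u) (f := fun p : ℂ × ℂ => ((p.1, b) : ℂ × ℂ)) (x := q)
        (hu _ (hbD q hq)) hinner
    exact this
  have he_ne : ∀ q : ℂ × ℂ, ‖q.1‖ < ε → e q ≠ 0 := by
    intro q hq; exact hu0 (q.1, b) hq hb
  -- fderiv of e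
  set L : (ℂ × ℂ) →L[ℂ] (ℂ × ℂ) :=
    (ContinuousLinearMap.fst ℂ ℂ ℂ).prod (0 : (ℂ × ℂ) →L[ℂ] ℂ) with hL
  have hasfd_e : ∀ q : ℂ × ℂ, ‖q.1‖ < ε →
      HasFDerivAt e ((fderiv ℂ u (q.1, b)).comp L) q := by
    intro q hq
    have hι : HasFDerivAt (fun p : ℂ × ℂ => ((p.1, b) : ℂ × ℂ)) L q :=
      (hasFDerivAt_fst).prodMk (hasFDerivAt_const b q)
    exact ((hu _ (hbD q hq)).differentiableAt.hasFDerivAt).comp q hι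
  have hL01 : L (((0:ℂ), (1:ℂ)) : ℂ × ℂ) = 0 := by
    simp [hL, Prod.ext_iff]
  have hL10 : L (((1:ℂ), (0:ℂ)) : ℂ × ℂ) = ((1:ℂ), (0:ℂ)) := by
    simp [hL, Prod.ext_iff]
  have hed2 : ∀ q : ℂ × ℂ, ‖q.1‖ < ε → fderiv ℂ e q ((0:ℂ), (1:ℂ)) = 0 := by
    intro q hq
    rw [(hasfd_e q hq).fderiv, ContinuousLinearMap.comp_apply, hL01, map_zero]
  -- base function
  set f₀ : ℂ × ℂ → ℂ := fun p => u p - e p with hf₀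
  have hf₀an : AnalyticOnNhd ℂ f₀ (ball ((0:ℂ), b) ρ₀) := by
    intro p hp
    have h1 : ‖p.1‖ < ε := (hballD hp).1
    exact (hu p (hballD hp)).sub (ha_e p h1)
  have hh_ball : AnalyticOnNhd ℂ h (ball ((0:ℂ), b) ρ₀) := fun p hp => hh p (hballD hp)
  have hd₀ : ∀ p ∈ ball ((0:ℂ), b) ρ₀,
      fderiv ℂ f₀ p ((0:ℂ), (1:ℂ)) = p.1 ^ m * h p := by
    intro p hp
    have hpD := hballD hp
    have h1 : ‖p.1‖ < ε := hpD.1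
    have hdiffu : DifferentiableAt ℂ u p := (hu p hpD).differentiableAt
    have hdiffe : DifferentiableAt ℂ e p := (hasfd_e p h1).differentiableAt
    have hsub : fderiv ℂ f₀ p = fderiv ℂ u p - fderiv ℂ e p := by
      rw [hf₀]
      exact fderiv_sub hdiffu hdiffe
    rw [hsub, ContinuousLinearMap.sub_apply, hed2 p h1, sub_zero]
    exact hder p h1 hpD.2
  have hψ₀ : ∀ x : ℂ, ((x:ℂ), b) ∈ ball ((0:ℂ), b) ρ₀ → f₀ (x, b) = 0 := by
    intro x _; simp [hf₀, he]
  obtain ⟨ρ', hρ'pos, hρ'le, G, hGan, hGe, hGd, hGψ⟩ :=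
    divPow m f₀ ρ₀ hρ₀pos hf₀an hh_ball hd₀ hψ₀
  have hsubρ' : ball ((0:ℂ), b) ρ' ⊆ ball ((0:ℂ), b) ρ₀ := ball_subset_ball hρ'le
  have hsubD : ball ((0:ℂ), b) ρ' ⊆ D := fun p hp => hballD (hsubρ' hp)
  have huq : ∀ q ∈ ball ((0:ℂ), b) ρ', u q = e q + q.1 ^ m * G q := by
    intro q hq
    have h1 := hGe q hq
    simp only [hf₀] at h1
    linear_combination h1
  -- coordinates
  set z₁ : ℂ × ℂ → ℂ := fun q => q.1 * e q with hz₁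
  set w : ℂ × ℂ → ℂ := fun q => ((e q) ^ (m + 1))⁻¹ with hw
  set z₂ : ℂ × ℂ → ℂ := fun q => G q * w q with hz₂
  have ha_w : ∀ q : ℂ × ℂ, ‖q.1‖ < ε → AnalyticAt ℂ w q := by
    intro q hq
    exact ((ha_e q hq).pow (m + 1)).inv (pow_ne_zero _ (he_ne q hq))
  have ha_z₁ : ∀ q : ℂ × ℂ, ‖q.1‖ < ε → AnalyticAt ℂ z₁ q := by
    intro q hq
    exact analyticAt_fst.mul (ha_e q hq)
  -- derivative of z₁
  have hz₁d : ∀ q : ℂ × ℂ, ‖q.1‖ < ε → ∀ v : ℂ × ℂ,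
      fderiv ℂ z₁ q v = q.1 * fderiv ℂ e q v + e q * v.1 := by
    intro q hq v
    have hdm := fderiv_fun_mul (𝕜 := ℂ) (differentiableAt_fst (p := q))
      (hasfd_e q hq).differentiableAt
    rw [hz₁]
    rw [show fderiv ℂ (fun q : ℂ × ℂ => q.1 * e q) q
        = q.1 • fderiv ℂ e q + e q • fderiv ℂ (fun p : ℂ × ℂ => p.1) q from hdm]
    simp only [ContinuousLinearMap.add_apply, ContinuousLinearMap.smul_apply, smul_eq_mul]
    congr 1
    rw [show (fun p : ℂ × ℂ => p.1) = Prod.fst from rfl, fderiv_fst]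
    rfl
  have hz₁d01 : ∀ q : ℂ × ℂ, ‖q.1‖ < ε → fderiv ℂ z₁ q ((0:ℂ), (1:ℂ)) = 0 := by
    intro q hq
    rw [hz₁d q hq, hed2 q hq]
    simp
  -- derivative of w in direction (0,1) is 0
  have hwd01 : ∀ q : ℂ × ℂ, ‖q.1‖ < ε → fderiv ℂ w q ((0:ℂ), (1:ℂ)) = 0 := by
    intro q hq
    have hφ : DifferentiableAt ℂ (fun z : ℂ => (z ^ (m + 1))⁻¹) (e q) :=
      ((differentiableAt_id.pow (m + 1)).inv (pow_ne_zero _ (he_ne q hq)))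
    have hcomp := (hφ.hasFDerivAt).comp q (hasfd_e q hq)
    have : fderiv ℂ w q = (fderiv ℂ (fun z : ℂ => (z ^ (m + 1))⁻¹) (e q)).comp
        ((fderiv ℂ u (q.1, b)).comp L) := by
      rw [hw]
      have h2 : (fun q : ℂ × ℂ => ((e q) ^ (m + 1))⁻¹)
          = (fun z : ℂ => (z ^ (m + 1))⁻¹) ∘ e := rfl
      rw [h2]
      exact hcomp.fderiv
    rw [this, ContinuousLinearMap.comp_apply, ContinuousLinearMap.comp_apply, hL01]
    simp
  -- derivative of z₂ in direction (0,1)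
  have hz₂d01 : ∀ q ∈ ball ((0:ℂ), b) ρ', fderiv ℂ z₂ q ((0:ℂ), (1:ℂ)) = w q * h q := by
    intro q hq
    have hq1 : ‖q.1‖ < ε := (hsubD hq).1
    have hdm := fderiv_fun_mul (𝕜 := ℂ) (hGan q hq).differentiableAt
      (ha_w q hq1).differentiableAt
    rw [hz₂]
    rw [show fderiv ℂ (fun q : ℂ × ℂ => G q * w q) q
        = G q • fderiv ℂ w q + w q • fderiv ℂ G q from hdm]
    simp only [ContinuousLinearMap.add_apply, ContinuousLinearMap.smul_apply, smul_eq_mul]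
    rw [hwd01 q hq1, hGd q hq]
    ring
  -- the open set U
  set A : ℂ × ℂ → ℂ := fun q => fderiv ℂ z₁ q (((1:ℂ), (0:ℂ)) : ℂ × ℂ) with hA
  set U : Set (ℂ × ℂ) := {q : ℂ × ℂ | q ∈ ball ((0:ℂ), b) ρ' ∧ A q ≠ 0 ∧ h q ≠ 0} with hU
  have hUsub : U ⊆ ball ((0:ℂ), b) ρ' := fun q hq => hq.1
  have hUD : U ⊆ D := fun q hq => hsubD hq.1
  have hAcont : ∀ q ∈ ball ((0:ℂ), b) ρ', ContinuousAt A q := by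
    intro q hq
    have hz₁an : AnalyticOnNhd ℂ z₁ (ball ((0:ℂ), b) ρ') := by
      intro p hp; exact ha_z₁ p (hsubD hp).1
    have hfd := hz₁an.fderiv
    exact ((ContinuousLinearMap.apply ℂ ℂ (((1:ℂ), (0:ℂ)) : ℂ × ℂ)).continuous.continuousAt).comp
      ((hfd q hq).continuousAt)
  have hUopen : IsOpen U := by
    rw [isOpen_iff_mem_nhds]
    intro q hq
    have h1 : ball ((0:ℂ), b) ρ' ∈ 𝓝 q := isOpen_ball.mem_nhds hq.1
    have h2 : {z : ℂ × ℂ | A z ≠ 0} ∈ 𝓝 q :=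
      (hAcont q hq.1).preimage_mem_nhds (isOpen_ne.mem_nhds hq.2.1)
    have h3 : {z : ℂ × ℂ | h z ≠ 0} ∈ 𝓝 q :=
      ((hh q (hUD hq)).continuousAt).preimage_mem_nhds (isOpen_ne.mem_nhds hq.2.2)
    filter_upwards [h1, h2, h3] with p hp1 hp2 hp3
    exact ⟨hp1, hp2, hp3⟩
  have hcenterρ' : ((0:ℂ), b) ∈ ball ((0:ℂ), b) ρ' := mem_ball_self hρ'pos
  have h0ε : ‖((0:ℂ), b).1‖ < ε := by simpa using hε
  have hA0 : A ((0:ℂ), b) = u (0, b) := by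
    show fderiv ℂ z₁ ((0:ℂ), b) (((1:ℂ), (0:ℂ)) : ℂ × ℂ) = u (0, b)
    rw [hz₁d _ h0ε]
    simp [he]
  have hu0b : u (0, b) ≠ 0 := hu0 (0, b) (by simpa using hε) hb
  have hcenterU : ((0:ℂ), b) ∈ U := ⟨hcenterρ', by rw [hA0]; exact hu0b, hhb⟩
  refine ⟨b, hb, U, hUopen, hcenterU, hUD, z₁, z₂, ?_, ?_, ⟨?_, ?_⟩, ?_, ⟨e, ?_, ?_, ?_⟩, ?_⟩
  · intro q hq; exact ha_z₁ q (hUD hq).1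
  · intro q hq
    exact (hGan q (hUsub hq)).mul (ha_w q (hUD hq).1)
  · simp [hz₁]
  · have hG0 : G ((0:ℂ), b) = 0 := hGψ 0 hcenterρ'
    rw [hz₂]
    simp only []
    rw [show (((0:ℂ), b) : ℂ × ℂ) = (((0:ℂ), b) : ℂ × ℂ) from rfl]
    show G ((0:ℂ), b) * w ((0:ℂ), b) = 0
    rw [hG0, zero_mul]
  · intro q hq
    have hq1 : ‖q.1‖ < ε := (hUD hq).1
    rw [hz₁d01 q hq1, hz₂d01 q (hUsub hq), zero_mul, sub_zero]
    exact mul_ne_zero hq.2.1 (mul_ne_zero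
      (inv_ne_zero (pow_ne_zero _ (he_ne q hq1))) hq.2.2)
  · intro q hq; exact ha_e q (hUD hq).1
  · intro q hq; exact he_ne q (hUD hq).1
  · intro q hq; rfl
  · intro q hq
    have hq1 : ‖q.1‖ < ε := (hUD hq).1
    have hu' := huq q (hUsub hq)
    have hene := he_ne q hq1
    have hpow : (e q) ^ (m + 1) ≠ 0 := pow_ne_zero _ hene
    rw [hu']
    show q.1 * (e q + q.1 ^ m * G q)
        = (q.1 * e q) * (1 + (q.1 * e q) ^ m * (G q * ((e q) ^ (m + 1))⁻¹))
    field_simp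
    ring
end

section
/- Let r, s > 0 and let g be an analytic nowhere-vanishing function on the polydisc D = Δ_r × Δ_s ⊆ ℂ². Suppose there exist a nonempty open subset V ⊆ D and one-variable analytic functions f₁ and f₂ such that g(z₁,z₂) = f₁(z₁)·f₂(z₂) for all (z₁,z₂) ∈ V. Then there exist analytic functions f̂₁ on Δ_r and f̂₂ on Δ_s such that g(z₁,z₂) = f̂₁(z₁)·f̂₂(z₂) for all (z₁,z₂) ∈ D. -/
open Complex

/-- **Propagation of a product decomposition from an open subset to the polydisc.**
If `g` is analytic and nowhere vanishing on `Δ_r × Δ_s` and `g(z₁,z₂) = f₁(z₁)·f₂(z₂)`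
on some nonempty open subset, then `g(z₁,z₂) = f̂₁(z₁)·f̂₂(z₂)` on the whole polydisc
for analytic functions `f̂₁` on `Δ_r` and `f̂₂` on `Δ_s`. -/
theorem product_decomposition_propagates
    (r s : ℝ) (hr : 0 < r) (hs : 0 < s)
    (g : ℂ × ℂ → ℂ)
    (hg : AnalyticOnNhd ℂ g {p : ℂ × ℂ | ‖p.1‖ < r ∧ ‖p.2‖ < s})
    (hg0 : ∀ p : ℂ × ℂ, ‖p.1‖ < r → ‖p.2‖ < s → g p ≠ 0)
    (hloc : ∃ V : Set (ℂ × ℂ), IsOpen V ∧ V.Nonempty ∧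
      V ⊆ {p : ℂ × ℂ | ‖p.1‖ < r ∧ ‖p.2‖ < s} ∧
      ∃ f₁ f₂ : ℂ → ℂ,
        (∀ p ∈ V, AnalyticAt ℂ f₁ p.1) ∧
        (∀ p ∈ V, AnalyticAt ℂ f₂ p.2) ∧
        (∀ p ∈ V, g p = f₁ p.1 * f₂ p.2)) :
    ∃ fh₁ fh₂ : ℂ → ℂ,
      AnalyticOnNhd ℂ fh₁ {z : ℂ | ‖z‖ < r} ∧
      AnalyticOnNhd ℂ fh₂ {z : ℂ | ‖z‖ < s} ∧
      ∀ p : ℂ × ℂ, ‖p.1‖ < r → ‖p.2‖ < s →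
        g p = fh₁ p.1 * fh₂ p.2 := by
  obtain ⟨V, hVopen, ⟨⟨a, b⟩, habV⟩, hVD, f₁, f₂, hf₁, hf₂, hprod⟩ := hloc
  set D : Set (ℂ × ℂ) := {p : ℂ × ℂ | ‖p.1‖ < r ∧ ‖p.2‖ < s} with hD
  obtain ⟨ha, hb⟩ : ‖a‖ < r ∧ ‖b‖ < s := hVD habV
  -- D is convex hence preconnected
  have hDconv : Convex ℝ D := by
    have : D = (Metric.ball (0:ℂ) r) ×ˢ (Metric.ball (0:ℂ) s) := by
      ext p
      simp [hD, Set.mem_prod, Metric.mem_ball, Complex.dist_eq, Complex.norm_def]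
    rw [this]
    exact (convex_ball 0 r).prod (convex_ball 0 s)
  have hDpre : IsPreconnected D := hDconv.isPreconnected
  -- the two analytic functions to compare
  set F : ℂ × ℂ → ℂ := fun p => g p * g (a, b) with hF
  set G : ℂ × ℂ → ℂ := fun p => g (p.1, b) * g (a, p.2) with hG
  have hFan : AnalyticOnNhd ℂ F D := fun p hp => (hg p hp).mul analyticAt_const
  have hGan : AnalyticOnNhd ℂ G D := by
    intro p hp
    have h1 : AnalyticAt ℂ (fun p : ℂ × ℂ => g (p.1, b)) p := by
      have : AnalyticAt ℂ (fun p : ℂ × ℂ => (p.1, b)) p :=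
        (analyticAt_fst).prod analyticAt_const
      exact AnalyticAt.comp (f := fun p : ℂ × ℂ => (p.1, b)) (hg (p.1, b) ⟨hp.1, hb⟩) this
    have h2 : AnalyticAt ℂ (fun p : ℂ × ℂ => g (a, p.2)) p := by
      have : AnalyticAt ℂ (fun p : ℂ × ℂ => (a, p.2)) p :=
        analyticAt_const.prod (analyticAt_snd)
      exact AnalyticAt.comp (f := fun p : ℂ × ℂ => (a, p.2)) (hg (a, p.2) ⟨ha, hp.2⟩) this
    exact h1.mul h2
  -- F = G near (a,b)
  have hev : F =ᶠ[nhds (a, b)] G := by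
    obtain ⟨U₁, U₂, hU₁, hU₂, haU, hbU, hUV⟩ :=
      isOpen_prod_iff.1 hVopen a b habV
    have hmem : U₁ ×ˢ U₂ ∈ nhds (a, b) :=
      (hU₁.prod hU₂).mem_nhds (Set.mk_mem_prod haU hbU)
    filter_upwards [hmem] with p hp
    obtain ⟨hp1, hp2⟩ := hp
    have e1 : g p = f₁ p.1 * f₂ p.2 := hprod p (hUV ⟨hp1, hp2⟩)
    have e2 : g (a, b) = f₁ a * f₂ b := hprod (a, b) habV
    have e3 : g (p.1, b) = f₁ p.1 * f₂ b := hprod (p.1, b) (hUV ⟨hp1, hbU⟩)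
    have e4 : g (a, p.2) = f₁ a * f₂ p.2 := hprod (a, p.2) (hUV ⟨haU, hp2⟩)
    simp only [hF, hG, e1, e2, e3, e4]
    ring
  have hEq : Set.EqOn F G D := by
    apply AnalyticOnNhd.eqOn_of_preconnected_of_eventuallyEq hFan hGan hDpre _ hev
    exact ⟨ha, hb⟩
  refine ⟨fun z => g (z, b), fun w => g (a, w) * (g (a, b))⁻¹, ?_, ?_, ?_⟩
  · intro z hz
    have : AnalyticAt ℂ (fun z : ℂ => (z, b)) z := analyticAt_id.prod analyticAt_const
    exact AnalyticAt.comp (f := fun z : ℂ => (z, b)) (hg (z, b) ⟨hz, hb⟩) this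
  · intro w hw
    have : AnalyticAt ℂ (fun w : ℂ => (a, w)) w := analyticAt_const.prod analyticAt_id
    exact (AnalyticAt.comp (f := fun w : ℂ => (a, w)) (hg (a, w) ⟨ha, hw⟩) this).mul analyticAt_const
  · intro p hp1 hp2
    have h := hEq (⟨hp1, hp2⟩ : p ∈ D)
    have hne : g (a, b) ≠ 0 := hg0 (a, b) ha hb
    simp only [hF, hG] at h
    rw [← mul_assoc, ← h, mul_inv_cancel_right₀ hne]
end

section
/- Let α ∈ ℂ with α ≠ 0. Then there do not exist an open neighborhood U ⊆ ℂ × Δ₁ of the point (0,0) and one-variable analytic functions f and h (defined on open sets containing {z₁ : (z₁,z₂) ∈ U} and {z₁(1+z₂) : (z₁,z₂) ∈ U} respectively) such that exp(α·Log(1+z₂)) = f(z₁)·h(z₁·(1+z₂)) for all (z₁,z₂) ∈ U, where Log denotes the principal branch of the logarithm. -/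
open Complex

/-- **Monodromy obstruction: no holomorphic closed decomposition along `{z₁ = 0}`.**
For `α ≠ 0`, there is no neighborhood `U ⊆ ℂ × Δ₁` of `(0,0)` and one-variable
analytic functions `f`, `h` with
`exp(α·Log(1+z₂)) = f(z₁)·h(z₁(1+z₂))` on `U`. -/
theorem no_closed_decomposition_of_monodromy_example
    (α : ℂ) (hα : α ≠ 0) :
    ¬ ∃ U : Set (ℂ × ℂ), IsOpen U ∧ ((0 : ℂ), (0 : ℂ)) ∈ U ∧
      U ⊆ {p : ℂ × ℂ | ‖p.2‖ < 1} ∧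
      ∃ f h : ℂ → ℂ,
        (∀ p ∈ U, AnalyticAt ℂ f p.1) ∧
        (∀ p ∈ U, AnalyticAt ℂ h (p.1 * (1 + p.2))) ∧
        (∀ p ∈ U, Complex.exp (α * Complex.log (1 + p.2)) =
          f p.1 * h (p.1 * (1 + p.2))) := by
  rintro ⟨U, hUopen, hU0, hUsub, f, h, hf, hh, heq⟩
  obtain ⟨ε, hε, hball⟩ := Metric.isOpen_iff.mp hUopen _ hU0
  have habs : 0 < ‖α‖ := by
    simpa using norm_pos_iff.mpr hα
  set t : ℝ := min (ε / 2) (Real.pi / ‖α‖) with ht_def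
  have ht0 : 0 < t := lt_min (by linarith) (div_pos Real.pi_pos habs)
  have hmem : ((0 : ℂ), (t : ℂ)) ∈ U := by
    apply hball
    simp only [Metric.mem_ball, Prod.dist_eq, dist_self, Complex.dist_eq, sub_zero]
    simp only [max_lt_iff]
    constructor
    · exact hε
    · rw [Complex.norm_real, Real.norm_eq_abs, abs_of_pos ht0]
      calc t ≤ ε / 2 := min_le_left _ _
        _ < ε := by linarith
  -- value at (0,0): f 0 * h 0 = 1
  have h00 := heq _ hU0
  simp only [add_zero, Complex.log_one, mul_zero, Complex.exp_zero, zero_mul] at h00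
  have ht := heq _ hmem
  simp only [zero_mul] at ht
  rw [← h00] at ht
  -- so exp (α * log (1 + t)) = 1
  set s : ℝ := Real.log (1 + t) with hs_def
  have hs0 : 0 < s := Real.log_pos (by linarith)
  have hlog : Complex.log (1 + (t : ℂ)) = (s : ℂ) := by
    rw [hs_def, Complex.ofReal_log (by linarith : (0:ℝ) ≤ 1 + t)]
    push_cast
    ring_nf
  rw [hlog] at ht
  obtain ⟨n, hn⟩ := Complex.exp_eq_one_iff.mp ht
  have hst : s ≤ t := by
    have := Real.log_le_sub_one_of_pos (by linarith : (0:ℝ) < 1 + t)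
    simpa [hs_def] using this
  have hbound : ‖α‖ * s ≤ Real.pi := by
    calc ‖α‖ * s ≤ ‖α‖ * t :=
          mul_le_mul_of_nonneg_left hst habs.le
      _ ≤ ‖α‖ * (Real.pi / ‖α‖) :=
          mul_le_mul_of_nonneg_left (min_le_right _ _) habs.le
      _ = Real.pi := by field_simp
  have habs_eq : ‖α * s‖ = |(n : ℝ)| * (2 * Real.pi) := by
    rw [hn]
    simp [abs_of_pos Real.pi_pos]
  rw [norm_mul, Complex.norm_real, Real.norm_eq_abs, abs_of_pos hs0] at habs_eq
  rcases eq_or_ne n 0 with h0 | h0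
  · rw [h0] at hn
    simp at hn
    rcases hn with hn | hn
    · exact hα hn
    · exact hs0.ne' (by exact_mod_cast hn)
  · have : (1 : ℝ) ≤ |(n : ℝ)| := by
      rw [← Int.cast_abs]
      exact_mod_cast Int.one_le_abs h0
    have : 2 * Real.pi ≤ |(n : ℝ)| * (2 * Real.pi) :=
      le_mul_of_one_le_left (by positivity) this
    nlinarith [Real.pi_pos]
end
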